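/- The derivative of the expected reward with respect to a preference coordinate satisfies ∂/∂H(a) [∑_b π(b)·r(b)] = π(a)·(r(a) − ∑_b π(b)·r(b)). Precisely: for fixed a ∈ Fin n, the derivative at t = 0 of the function t ↦ ∑_b [exp((H + t·e_a)(b)) / ∑_c exp((H + t·e_a)(c))] · r(b) equals π(a)·(r(a) − ∑_b π(b)·r(b)). -/

import Mathlib

open Real Finset

/-- Derivative of the expected reward w.r.t. a preference coordinate:
`∂/∂H(a) [∑_b π(b)·r(b)] = π(a)·(r(a) − ∑_b π(b)·r(b))`, where the preference
vector `H` is perturbed by `t` in coordinate `a` and we differentiate at `t = 0`. -/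
theorem expected_reward_deriv
    (n : ℕ) (hn : 1 ≤ n) (H : Fin n → ℝ) (r : Fin n → ℝ) (a : Fin n)
    (pr : Fin n → ℝ) (hpr : ∀ c, pr c = Real.exp (H c) / ∑ d, Real.exp (H d)) :
    HasDerivAt
      (fun t : ℝ =>
        ∑ b, (Real.exp (H b + t * (if b = a then (1 : ℝ) else 0)) /
            ∑ c, Real.exp (H c + t * (if c = a then (1 : ℝ) else 0))) * r b)
      (pr a * (r a - ∑ b, pr b * r b)) 0 := by
  classical
  set Z : ℝ := ∑ d, Real.exp (H d) with hZ
  have hZpos : 0 < Z := Finset.sum_pos (fun d _ => Real.exp_pos _)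
    (Finset.univ_nonempty_iff.mpr ⟨⟨0, hn⟩⟩)
  have hZne : Z ≠ 0 := hZpos.ne'
  have hf : ∀ b : Fin n, HasDerivAt
      (fun t : ℝ => Real.exp (H b + t * (if b = a then (1:ℝ) else 0)))
      ((if b = a then (1:ℝ) else 0) * Real.exp (H b)) 0 := by
    intro b
    have h1 : HasDerivAt (fun t : ℝ => H b + t * (if b = a then (1:ℝ) else 0))
        (if b = a then (1:ℝ) else 0) 0 := by
      simpa using ((hasDerivAt_id (0:ℝ)).mul_const
        (if b = a then (1:ℝ) else 0)).const_add (H b)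
    simpa [mul_comm] using h1.exp
  have hS : HasDerivAt
      (fun t : ℝ => ∑ c, Real.exp (H c + t * (if c = a then (1:ℝ) else 0)))
      (Real.exp (H a)) 0 := by
    have := HasDerivAt.fun_sum (fun c (_ : c ∈ Finset.univ) => hf c)
    simpa [ite_mul, Finset.sum_ite_eq'] using this
  have hS0 : (∑ c, Real.exp (H c + 0 * (if c = a then (1:ℝ) else 0))) = Z := by
    simp [hZ]
  have hg : ∀ b : Fin n, HasDerivAt
      (fun t : ℝ => (Real.exp (H b + t * (if b = a then (1:ℝ) else 0)) /
          ∑ c, Real.exp (H c + t * (if c = a then (1:ℝ) else 0))) * r b)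
      ((((if b = a then (1:ℝ) else 0) * Real.exp (H b) * Z
          - Real.exp (H b) * Real.exp (H a)) / Z^2) * r b) 0 := by
    intro b
    have := ((hf b).div hS (by rw [hS0]; exact hZne)).mul_const (r b)
    simpa [hS0] using this
  have hsum := HasDerivAt.fun_sum (fun b (_ : b ∈ Finset.univ) => hg b)
  have key : ∀ b : Fin n,
      ((((if b = a then (1:ℝ) else 0) * Real.exp (H b) * Z
          - Real.exp (H b) * Real.exp (H a)) / Z^2) * r b)
        = (if b = a then pr a * r a else 0) - pr a * (pr b * r b) := by
    intro b
    rcases eq_or_ne b a with rfl | hba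
    · simp only [if_pos rfl, ↓reduceIte, hpr, ← hZ]
      field_simp
    · simp only [if_neg hba, hpr, ← hZ]
      field_simp
      ring
  have hval : (∑ b, ((((if b = a then (1:ℝ) else 0) * Real.exp (H b) * Z
          - Real.exp (H b) * Real.exp (H a)) / Z^2) * r b))
      = pr a * (r a - ∑ b, pr b * r b) := by
    rw [Finset.sum_congr rfl (fun b _ => key b), Finset.sum_sub_distrib,
      Finset.sum_ite_eq' Finset.univ a (fun _ => pr a * r a), if_pos (Finset.mem_univ a),
      ← Finset.mul_sum, mul_sub]
  rw [← hval]
  exact hsum
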